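/- Let k ≥ 6 and let G be an odd k⁺-critical graph. Then G has no vertex of degree 1, and for every easy vertex v (a vertex of odd degree or with a 2-neighbor), 2·d(v) ≥ |N₂(v)| + |N_ez(v)| + k − 1, where N₂(v) is the set of 2-neighbors of v and N_ez(v) the set of easy neighbors of v. -/

import Mathlib

open SimpleGraph

/-- The degree of a vertex, as the cardinality of its neighbor set. -/
noncomputable def deg {V : Type} (G : SimpleGraph V) (v : V) : ℕ := (G.neighborSet v).ncard

/-- `H` is a minor of `G`, via branch sets. -/
def IsMinor {W V : Type} (H : SimpleGraph W) (G : SimpleGraph V) : Prop :=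
  ∃ B : W → Set V,
    (∀ w, (B w).Nonempty) ∧
    (∀ w, (G.induce (B w)).Connected) ∧
    (Pairwise fun w₁ w₂ => Disjoint (B w₁) (B w₂)) ∧
    (∀ w₁ w₂, H.Adj w₁ w₂ → ∃ v₁ ∈ B w₁, ∃ v₂ ∈ B w₂, G.Adj v₁ v₂)

/-- A graph is planar iff it has no `K₅` and no `K₃,₃` minor (Wagner's theorem). -/
def IsPlanar {V : Type} (G : SimpleGraph V) : Prop :=
  ¬ IsMinor (completeGraph (Fin 5)) G ∧
  ¬ IsMinor (completeBipartiteGraph (Fin 3) (Fin 3)) G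

/-- `G` has thickness at most `t`: its edge set partitions into `t` planar subgraphs. -/
def ThicknessLE {V : Type} (G : SimpleGraph V) (t : ℕ) : Prop :=
  ∃ c : Sym2 V → Fin t, ∀ i : Fin t,
    IsPlanar (SimpleGraph.fromEdgeSet {e | e ∈ G.edgeSet ∧ c e = i})

/-- The thickness of a graph. -/
noncomputable def thickness {V : Type} (G : SimpleGraph V) : ℕ :=
  sInf {t | ThicknessLE G t}

/-- `φ` is an odd coloring of `G` with `k` colors. -/
def IsOddColoring {V : Type} (G : SimpleGraph V) {k : ℕ} (φ : V → Fin k) : Prop :=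
  (∀ ⦃u v⦄, G.Adj u v → φ u ≠ φ v) ∧
  ∀ v : V, (G.neighborSet v).Nonempty →
    ∃ c : Fin k, Odd ({u | u ∈ G.neighborSet v ∧ φ u = c}.ncard)

/-- The odd chromatic number of `G`. -/
noncomputable def oddChrom {V : Type} (G : SimpleGraph V) : ℕ :=
  sInf {k | ∃ φ : V → Fin k, IsOddColoring G φ}

/-- `G` is odd `k⁺`-critical. -/
def OddCritical {V : Type} (G : SimpleGraph V) (k : ℕ) : Prop :=
  k ≤ oddChrom G ∧ ∀ H : G.Subgraph, H ≠ ⊤ → oddChrom H.coe < k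

/-- A vertex is `n`-easy if its degree is odd or it has a neighbor of degree `2i`, `1 ≤ i ≤ n`. -/
def NEasy {V : Type} (G : SimpleGraph V) (n : ℕ) (v : V) : Prop :=
  Odd (deg G v) ∨ ∃ u ∈ G.neighborSet v, ∃ i, 1 ≤ i ∧ i ≤ n ∧ deg G u = 2 * i



-- parity of number of odd fibers
lemma parity_fibers {V C : Type} [Fintype V] [Fintype C] (S : Set V) (f : V → C) :
    {c | Odd ({u | u ∈ S ∧ f u = c}.ncard)}.ncard % 2 = S.ncard % 2 := by
  classical
  have hS : S.toFinset.card = ∑ c : C, (S.toFinset.filter (fun u => f u = c)).card := by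
    apply Finset.card_eq_sum_card_fiberwise
    intro x _; exact Finset.mem_univ _
  have hfib : ∀ c : C, {u | u ∈ S ∧ f u = c}.ncard = (S.toFinset.filter (fun u => f u = c)).card := by
    intro c
    rw [Set.ncard_eq_toFinset_card']
    congr 1
    ext u
    simp [Set.mem_toFinset]
  have hodds : {c | Odd ({u | u ∈ S ∧ f u = c}.ncard)}.ncard
      = (Finset.univ.filter (fun c : C => Odd ((S.toFinset.filter (fun u => f u = c)).card))).card := by
    rw [Set.ncard_eq_toFinset_card']
    congr 1
    ext c
    simp [Set.mem_toFinset, hfib c]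
  rw [hodds, Set.ncard_eq_toFinset_card', hS]
  rw [Finset.sum_nat_mod]
  have : ∀ c : C, (S.toFinset.filter (fun u => f u = c)).card % 2
      = if Odd ((S.toFinset.filter (fun u => f u = c)).card) then 1 else 0 := by
    intro c
    rcases Nat.even_or_odd ((S.toFinset.filter (fun u => f u = c)).card) with h | h
    · simp [Nat.even_iff.mp h, Nat.not_odd_iff_even.mpr h]
    · simp [Nat.odd_iff.mp h, h]
  rw [Finset.sum_congr rfl (fun c _ => this c), Finset.sum_boole]
  simp

lemma exists_oddColoring_card {W : Type} [Fintype W] (G : SimpleGraph W) :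
    ∃ φ : W → Fin (Fintype.card W), IsOddColoring G φ := by
  classical
  refine ⟨Fintype.equivFin W, ?_, ?_⟩
  · intro u v huv
    simp [huv.ne]
  · intro v ⟨u, hu⟩
    refine ⟨Fintype.equivFin W u, ?_⟩
    have : {w | w ∈ G.neighborSet v ∧ Fintype.equivFin W w = Fintype.equivFin W u} = {u} := by
      ext w
      constructor
      · rintro ⟨_, hw⟩
        exact (Fintype.equivFin W).injective hw
      · rintro rfl
        exact ⟨hu, rfl⟩
    rw [this, Set.ncard_singleton]
    exact odd_one

lemma exists_oddColoring_le {W : Type} [Fintype W] (G : SimpleGraph W) (m : ℕ)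
    (h : oddChrom G ≤ m) : ∃ φ : W → Fin m, IsOddColoring G φ := by
  classical
  have hne : {k | ∃ φ : W → Fin k, IsOddColoring G φ}.Nonempty :=
    ⟨Fintype.card W, exists_oddColoring_card G⟩
  have hmem : oddChrom G ∈ {k | ∃ φ : W → Fin k, IsOddColoring G φ} := Nat.sInf_mem hne
  obtain ⟨φ, hφ⟩ := hmem
  refine ⟨Fin.castLE h ∘ φ, ?_, ?_⟩
  · intro u v huv hEq
    exact hφ.1 huv (Fin.castLE_injective h hEq)
  · intro v hv
    obtain ⟨c, hc⟩ := hφ.2 v hv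
    refine ⟨Fin.castLE h c, ?_⟩
    have : {u | u ∈ G.neighborSet v ∧ (Fin.castLE h ∘ φ) u = Fin.castLE h c}
        = {u | u ∈ G.neighborSet v ∧ φ u = c} := by
      ext u
      simp only [Set.mem_setOf_eq, Function.comp_apply, and_congr_right_iff]
      intro _
      exact ⟨fun hh => Fin.castLE_injective h hh, fun hh => by rw [hh]⟩
    rwa [this]

/-- Bridge: from criticality, a coloring of `G - v` expressed on `V`. -/
lemma bridge {V : Type} [Fintype V] (G : SimpleGraph V) (k : ℕ) (hk : 6 ≤ k)
    (hG : OddCritical G k) (v : V) :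
    ∃ φ : V → Fin (k-1),
      (∀ ⦃x y⦄, x ≠ v → y ≠ v → G.Adj x y → φ x ≠ φ y) ∧
      (∀ z, z ≠ v → ((G.neighborSet z) \ {v}).Nonempty →
        ∃ c, Odd ({u | u ∈ G.neighborSet z ∧ u ≠ v ∧ φ u = c}.ncard)) := by
  classical
  set H : G.Subgraph := (⊤ : G.Subgraph).deleteVerts {v} with hH
  have hverts : H.verts = Set.univ \ {v} := by
    simp [hH, SimpleGraph.Subgraph.deleteVerts_verts]
  have hne : H ≠ ⊤ := by
    intro hEq
    have : v ∈ H.verts := by rw [hEq]; simp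
    rw [hverts] at this
    simp at this
  have hlt : oddChrom H.coe < k := hG.2 H hne
  have hmem : ∀ x : V, x ≠ v → x ∈ H.verts := by
    intro x hx; rw [hverts]; exact ⟨Set.mem_univ x, hx⟩
  obtain ⟨φH, hφH⟩ := exists_oddColoring_le H.coe (k-1) (by omega)
  have hk1 : 0 < k - 1 := by omega
  refine ⟨fun x => if h : x = v then ⟨0, hk1⟩ else φH ⟨x, hmem x h⟩, ?_, ?_⟩
  · intro x y hx hy hxy
    simp only [dif_neg hx, dif_neg hy]
    have hadj : H.coe.Adj ⟨x, hmem x hx⟩ ⟨y, hmem y hy⟩ := by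
      simp [hH, SimpleGraph.Subgraph.deleteVerts_adj, hx, hy, hxy]
    exact hφH.1 hadj
  · intro z hz ⟨u, hu⟩
    have huN : u ∈ G.neighborSet z := hu.1
    have huv : u ≠ v := hu.2
    have hadj : H.coe.Adj ⟨z, hmem z hz⟩ ⟨u, hmem u huv⟩ := by
      simp [hH, SimpleGraph.Subgraph.deleteVerts_adj, hz, huv]
      exact huN
    obtain ⟨c, hc⟩ := hφH.2 ⟨z, hmem z hz⟩ ⟨⟨u, hmem u huv⟩, hadj⟩
    refine ⟨c, ?_⟩
    have himg : {u' | u' ∈ G.neighborSet z ∧ u' ≠ v ∧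
        (fun x => if h : x = v then (⟨0, hk1⟩ : Fin (k-1)) else φH ⟨x, hmem x h⟩) u' = c}
        = Subtype.val '' {w | w ∈ H.coe.neighborSet ⟨z, hmem z hz⟩ ∧ φH w = c} := by
      ext x
      simp only [Set.mem_setOf_eq, Set.mem_image]
      constructor
      · rintro ⟨hxN, hxv, hxc⟩
        refine ⟨⟨x, hmem x hxv⟩, ⟨?_, ?_⟩, rfl⟩
        · simp [SimpleGraph.Subgraph.coe_adj, hH, SimpleGraph.Subgraph.deleteVerts_adj, hz, hxv]
          exact hxN
        · rwa [dif_neg hxv] at hxc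
      · rintro ⟨⟨w, hw⟩, ⟨hwN, hwc⟩, rfl⟩
        have hwv : w ≠ v := by
          rw [hverts] at hw; exact hw.2
        refine ⟨?_, hwv, ?_⟩
        · have := hwN
          simp [SimpleGraph.Subgraph.coe_adj, hH, SimpleGraph.Subgraph.deleteVerts_adj] at this
          exact this.2.2
        · rw [dif_neg hwv]
          convert hwc
      
    rw [himg, Set.ncard_image_of_injective _ Subtype.val_injective]
    exact hc

noncomputable def cnt {V C : Type} (G : SimpleGraph V) (ψ : V → C) (z : V) (c : C) : ℕ :=
  {u | u ∈ G.neighborSet z ∧ ψ u = c}.ncard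

def OddsSet {V C : Type} (G : SimpleGraph V) (ψ : V → C) (z : V) : Set C :=
  {c | Odd (cnt G ψ z c)}

lemma cnt_update_not_mem {V C : Type} [Fintype V] [DecidableEq V] (G : SimpleGraph V) (ψ : V → C)
    (r z : V) (β : C) (hrz : r ∉ G.neighborSet z) (c : C) :
    cnt G (Function.update ψ r β) z c = cnt G ψ z c := by
  unfold cnt
  congr 1
  ext u
  simp only [Set.mem_setOf_eq, and_congr_right_iff]
  intro hu
  have : u ≠ r := fun h => hrz (h ▸ hu)
  rw [Function.update_of_ne this]

lemma cnt_update_mem_beta {V C : Type} [Fintype V] [DecidableEq V] (G : SimpleGraph V) (ψ : V → C)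
    (r z : V) (β : C) (hrz : r ∈ G.neighborSet z) (hβ : β ≠ ψ r) :
    cnt G (Function.update ψ r β) z β = cnt G ψ z β + 1 := by
  unfold cnt
  have h1 : {u | u ∈ G.neighborSet z ∧ Function.update ψ r β u = β}
      = insert r {u | u ∈ G.neighborSet z ∧ ψ u = β} := by
    ext u
    simp only [Set.mem_setOf_eq, Set.mem_insert_iff]
    constructor
    · rintro ⟨hu, hc⟩
      by_cases h : u = r
      · exact Or.inl h
      · right; rw [Function.update_of_ne h] at hc; exact ⟨hu, hc⟩
    · rintro (rfl | ⟨hu, hc⟩)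
      · exact ⟨hrz, Function.update_self _ _ _⟩
      · have h : u ≠ r := fun h => hβ (by rw [← hc, h])
        exact ⟨hu, by rw [Function.update_of_ne h]; exact hc⟩
  rw [h1, Set.ncard_insert_of_notMem (fun h => hβ h.2.symm) (Set.toFinite _)]

lemma cnt_update_mem_old {V C : Type} [Fintype V] [DecidableEq V] (G : SimpleGraph V) (ψ : V → C)
    (r z : V) (β : C) (hrz : r ∈ G.neighborSet z) (hβ : β ≠ ψ r) :
    cnt G ψ z (ψ r) = cnt G (Function.update ψ r β) z (ψ r) + 1 := by
  unfold cnt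
  have h1 : {u | u ∈ G.neighborSet z ∧ ψ u = ψ r}
      = insert r {u | u ∈ G.neighborSet z ∧ Function.update ψ r β u = ψ r} := by
    ext u
    simp only [Set.mem_setOf_eq, Set.mem_insert_iff]
    constructor
    · rintro ⟨hu, hc⟩
      by_cases h : u = r
      · exact Or.inl h
      · right; exact ⟨hu, by rw [Function.update_of_ne h]; exact hc⟩
    · rintro (rfl | ⟨hu, hc⟩)
      · exact ⟨hrz, rfl⟩
      · have h : u ≠ r := by
          rintro rfl
          rw [Function.update_self] at hc
          exact hβ hc
        rw [Function.update_of_ne h] at hc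
        exact ⟨hu, hc⟩
  rw [h1, Set.ncard_insert_of_notMem ?_ (Set.toFinite _)]
  rintro ⟨_, hc⟩
  rw [Function.update_self] at hc
  exact hβ hc

lemma cnt_update_mem_other {V C : Type} [Fintype V] [DecidableEq V] (G : SimpleGraph V) (ψ : V → C)
    (r z : V) (β : C) (c : C) (hcβ : c ≠ β) (hcr : c ≠ ψ r) :
    cnt G (Function.update ψ r β) z c = cnt G ψ z c := by
  unfold cnt
  congr 1
  ext u
  simp only [Set.mem_setOf_eq, and_congr_right_iff]
  intro _
  by_cases h : u = r
  · subst h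
    rw [Function.update_self]
    exact ⟨fun h => absurd h.symm hcβ, fun h => absurd h.symm hcr⟩
  · rw [Function.update_of_ne h]

lemma repair {V C : Type} [Fintype V] [DecidableEq V] [Fintype C] (hC : 5 ≤ Fintype.card C)
    (G : SimpleGraph V) (ψ : V → C) (r a b : V) (hab : a ≠ b)
    (hN : G.neighborSet r = {a, b})
    (htarget : OddsSet G ψ a = ∅ ∨ OddsSet G ψ b = ∅ ∨ ψ r = ψ a ∨ ψ r = ψ b) :
    ∃ β : C, β ≠ ψ r ∧ β ≠ ψ a ∧ β ≠ ψ b ∧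
      (OddsSet G (Function.update ψ r β) a).Nonempty ∧
      (OddsSet G (Function.update ψ r β) b).Nonempty ∧
      (∀ z, z ≠ a → z ≠ b → OddsSet G (Function.update ψ r β) z = OddsSet G ψ z) ∧
      (∀ x y, G.Adj x y → Function.update ψ r β x = Function.update ψ r β y →
        (ψ x = ψ y ∧ x ≠ r ∧ y ≠ r)) := by
  classical
  set bad : V → Set C := fun z => {c | OddsSet G ψ z = {ψ r, c}} with hbad
  have hbadsub : ∀ z, (bad z).ncard ≤ 1 := by
    intro z
    rw [Set.ncard_le_one (Set.toFinite _)]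
    intro c₁ h₁ c₂ h₂
    simp only [hbad, Set.mem_setOf_eq] at h₁ h₂
    have h12 : ({ψ r, c₁} : Set C) = {ψ r, c₂} := by rw [← h₁, ← h₂]
    have hc1 : c₁ ∈ ({ψ r, c₂} : Set C) := h12 ▸ (by simp)
    rcases hc1 with h | h
    · -- c₁ = ψ r : then {ψ r, c₂} = {ψ r} so c₂ = ψ r
      have : c₂ ∈ ({ψ r, c₁} : Set C) := h12 ▸ (by simp)
      rcases this with h' | h'
      · rw [h, h']
      · exact h'.symm
    · exact h
  have hbadempty : ∀ z, OddsSet G ψ z = ∅ → bad z = ∅ := by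
    intro z hz
    ext c
    simp only [hbad, Set.mem_setOf_eq, hz, Set.mem_empty_iff_false, iff_false]
    intro h
    have : ψ r ∈ (∅ : Set C) := by rw [h]; simp
    exact this
  set F : Set C := {ψ a, ψ b, ψ r} ∪ (bad a ∪ bad b) with hF
  have hFcard : F.ncard ≤ 4 := by
    have h3 : ∀ s t : Set C, (s ∪ t).ncard ≤ s.ncard + t.ncard := fun s t => Set.ncard_union_le s t
    have hbb : (bad a ∪ bad b).ncard ≤ 2 := by
      calc (bad a ∪ bad b).ncard ≤ (bad a).ncard + (bad b).ncard := h3 _ _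
        _ ≤ 2 := by have := hbadsub a; have := hbadsub b; omega
    rcases htarget with h | h | h | h
    · have : (bad a ∪ bad b).ncard ≤ 1 := by
        rw [hbadempty a h, Set.empty_union]; exact hbadsub b
      have ht : ({ψ a, ψ b, ψ r} : Set C).ncard ≤ 3 := by
        calc ({ψ a, ψ b, ψ r} : Set C).ncard ≤ ({ψ b, ψ r} : Set C).ncard + 1 :=
            Set.ncard_insert_le _ _
          _ ≤ (({ψ r} : Set C).ncard + 1) + 1 := by
              have := Set.ncard_insert_le (ψ b) ({ψ r} : Set C); omega
          _ ≤ 3 := by simp [Set.ncard_singleton]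
      calc F.ncard ≤ ({ψ a, ψ b, ψ r} : Set C).ncard + (bad a ∪ bad b).ncard := h3 _ _
        _ ≤ 4 := by omega
    · have : (bad a ∪ bad b).ncard ≤ 1 := by
        rw [hbadempty b h, Set.union_empty]; exact hbadsub a
      have ht : ({ψ a, ψ b, ψ r} : Set C).ncard ≤ 3 := by
        calc ({ψ a, ψ b, ψ r} : Set C).ncard ≤ ({ψ b, ψ r} : Set C).ncard + 1 :=
            Set.ncard_insert_le _ _
          _ ≤ (({ψ r} : Set C).ncard + 1) + 1 := by
              have := Set.ncard_insert_le (ψ b) ({ψ r} : Set C); omega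
          _ ≤ 3 := by simp [Set.ncard_singleton]
      calc F.ncard ≤ ({ψ a, ψ b, ψ r} : Set C).ncard + (bad a ∪ bad b).ncard := h3 _ _
        _ ≤ 4 := by omega
    · have ht : ({ψ a, ψ b, ψ r} : Set C).ncard ≤ 2 := by
        have : ({ψ a, ψ b, ψ r} : Set C) = {ψ a, ψ b} := by
          rw [← h]; ext c; simp only [Set.mem_insert_iff, Set.mem_singleton_iff]; tauto
        rw [this]
        calc ({ψ a, ψ b} : Set C).ncard ≤ ({ψ b} : Set C).ncard + 1 := Set.ncard_insert_le _ _
          _ ≤ 2 := by simp [Set.ncard_singleton]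
      calc F.ncard ≤ ({ψ a, ψ b, ψ r} : Set C).ncard + (bad a ∪ bad b).ncard := h3 _ _
        _ ≤ 4 := by omega
    · have ht : ({ψ a, ψ b, ψ r} : Set C).ncard ≤ 2 := by
        have : ({ψ a, ψ b, ψ r} : Set C) = {ψ a, ψ b} := by
          rw [← h]; ext c; simp only [Set.mem_insert_iff, Set.mem_singleton_iff]; tauto
        rw [this]
        calc ({ψ a, ψ b} : Set C).ncard ≤ ({ψ b} : Set C).ncard + 1 := Set.ncard_insert_le _ _
          _ ≤ 2 := by simp [Set.ncard_singleton]
      calc F.ncard ≤ ({ψ a, ψ b, ψ r} : Set C).ncard + (bad a ∪ bad b).ncard := h3 _ _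
        _ ≤ 4 := by omega
  -- choose β outside F
  have hβex : ((Set.univ : Set C) \ F).Nonempty := by
    apply Set.diff_nonempty_of_ncard_lt_ncard
    · rw [Set.ncard_univ, Nat.card_eq_fintype_card]
      omega
    · exact Set.toFinite _
  obtain ⟨β, hβmem⟩ := hβex
  have hβF : β ∉ F := hβmem.2
  have hβr : β ≠ ψ r := fun h => hβF (by rw [hF]; left; right; right; exact h)
  have hβa : β ≠ ψ a := fun h => hβF (by rw [hF]; left; left; exact h)
  have hβb : β ≠ ψ b := fun h => hβF (by rw [hF]; left; right; left; exact h)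
  have hβbada : β ∉ bad a := fun h => hβF (by rw [hF]; right; left; exact h)
  have hβbadb : β ∉ bad b := fun h => hβF (by rw [hF]; right; right; exact h)
  have hra : r ∈ G.neighborSet a := by
    rw [SimpleGraph.mem_neighborSet, SimpleGraph.adj_comm, ← SimpleGraph.mem_neighborSet, hN]
    simp
  have hrb : r ∈ G.neighborSet b := by
    rw [SimpleGraph.mem_neighborSet, SimpleGraph.adj_comm, ← SimpleGraph.mem_neighborSet, hN]
    simp
  -- key: for z ∈ {a, b}, new odds set nonempty
  have hkey : ∀ z, r ∈ G.neighborSet z → β ∉ bad z →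
      (OddsSet G (Function.update ψ r β) z).Nonempty := by
    intro z hrz hβbad
    by_contra hempty
    rw [Set.not_nonempty_iff_eq_empty] at hempty
    have hall : ∀ c, ¬ Odd (cnt G (Function.update ψ r β) z c) := by
      intro c hc
      have : c ∈ OddsSet G (Function.update ψ r β) z := hc
      rw [hempty] at this
      exact this
    apply hβbad
    rw [hbad]
    simp only [Set.mem_setOf_eq]
    ext c
    simp only [OddsSet, Set.mem_setOf_eq, Set.mem_insert_iff, Set.mem_singleton_iff]
    constructor
    · intro hc
      by_contra hcon
      push_neg at hcon
      have := cnt_update_mem_other G ψ r z β c (hcon.2) (hcon.1)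
      exact hall c (this ▸ hc)
    · rintro (hcr | hcβ)
      · rw [hcr]
        have := cnt_update_mem_old G ψ r z β hrz hβr
        have h2 := hall (ψ r)
        rw [this]
        rcases Nat.even_or_odd (cnt G (Function.update ψ r β) z (ψ r)) with he | ho
        · exact Even.add_one he
        · exact absurd ho h2
      · rw [hcβ]
        have := cnt_update_mem_beta G ψ r z β hrz hβr
        have h2 := hall β
        rw [this] at h2
        rcases Nat.even_or_odd (cnt G ψ z β) with he | ho
        · exact absurd (Even.add_one he) h2
        · exact ho
  refine ⟨β, hβr, hβa, hβb, hkey a hra hβbada, hkey b hrb hβbadb, ?_, ?_⟩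
  · intro z hza hzb
    have hrz : r ∉ G.neighborSet z := by
      intro h
      have : z ∈ G.neighborSet r := by
        rw [SimpleGraph.mem_neighborSet, SimpleGraph.adj_comm]
        exact h
      rw [hN] at this
      rcases this with h' | h'
      · exact hza h'
      · exact hzb h'
    ext c
    simp only [OddsSet, Set.mem_setOf_eq]
    rw [cnt_update_not_mem G ψ r z β hrz]
  · intro x y hxy hEq
    by_cases hxr : x = r
    · subst hxr
      have hy : y ∈ G.neighborSet x := hxy
      rw [hN] at hy
      have hyx : y ≠ x := (G.ne_of_adj hxy).symm
      rw [Function.update_self, Function.update_of_ne hyx] at hEq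
      rcases hy with rfl | rfl
      · exact absurd hEq hβa
      · exact absurd hEq hβb
    · by_cases hyr : y = r
      · subst hyr
        have hx : x ∈ G.neighborSet y := (G.adj_symm hxy)
        rw [hN] at hx
        rw [Function.update_self, Function.update_of_ne hxr] at hEq
        rcases hx with rfl | rfl
        · exact absurd hEq.symm hβa
        · exact absurd hEq.symm hβb
      · rw [Function.update_of_ne hxr, Function.update_of_ne hyr] at hEq
        exact ⟨hEq, hxr, hyr⟩

def VioV {V C : Type} (G : SimpleGraph V) (ψ : V → C) : Set V :=
  {z | (G.neighborSet z).Nonempty ∧ OddsSet G ψ z = ∅}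

def VioE {V C : Type} (G : SimpleGraph V) (ψ : V → C) : Set (V × V) :=
  {p | G.Adj p.1 p.2 ∧ ψ p.1 = ψ p.2}

lemma colorable_of_inv {V : Type} [Fintype V] [DecidableEq V] (G : SimpleGraph V)
    (m : ℕ) (hm : 5 ≤ m) :
    ∀ (n : ℕ) (ψ : V → Fin m),
    (∀ p ∈ VioE G ψ, deg G p.1 = 2 ∨ deg G p.2 = 2) →
    (∀ z ∈ VioV G ψ, ∃ r ∈ G.neighborSet z, deg G r = 2) →
    (VioV G ψ).ncard + (VioE G ψ).ncard ≤ n →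
    ∃ φ : V → Fin m, IsOddColoring G φ := by
  classical
  have hcard : 5 ≤ Fintype.card (Fin m) := by simp [hm]
  intro n
  induction n with
  | zero =>
    intro ψ _ _ hn
    have hV : VioV G ψ = ∅ := by
      rw [← Set.ncard_eq_zero (Set.toFinite _)]; omega
    have hE : VioE G ψ = ∅ := by
      rw [← Set.ncard_eq_zero (Set.toFinite _)]; omega
    refine ⟨ψ, ?_, ?_⟩
    · intro x y hxy hEq
      have : (x, y) ∈ VioE G ψ := ⟨hxy, hEq⟩
      rw [hE] at this; exact this
    · intro z hz
      by_contra hcon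
      push_neg at hcon
      have hodds : OddsSet G ψ z = ∅ := by
        ext c
        simp only [OddsSet, Set.mem_setOf_eq, Set.mem_empty_iff_false, iff_false]
        exact hcon c
      have : z ∈ VioV G ψ := ⟨hz, hodds⟩
      rw [hV] at this; exact this
  | succ n ih =>
    intro ψ hInvE hInvV hn
    by_cases hV : (VioV G ψ).Nonempty
    · obtain ⟨z, hz⟩ := hV
      obtain ⟨r, hrN, hr2⟩ := hInvV z hz
      obtain ⟨a, b, hab, hN⟩ := Set.ncard_eq_two.mp hr2
      have hzab : z = a ∨ z = b := by
        have : z ∈ G.neighborSet r := by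
          rw [SimpleGraph.mem_neighborSet, SimpleGraph.adj_comm]
          exact hrN
        rw [hN] at this
        exact this
      have htarget : OddsSet G ψ a = ∅ ∨ OddsSet G ψ b = ∅ ∨ ψ r = ψ a ∨ ψ r = ψ b := by
        rcases hzab with rfl | rfl
        · exact Or.inl hz.2
        · exact Or.inr (Or.inl hz.2)
      obtain ⟨β, hβr, hβa, hβb, hOa, hOb, hOsame, hprop⟩ :=
        repair hcard G ψ r a b hab hN htarget
      set ψ' := Function.update ψ r β with hψ'
      have hVsub : VioV G ψ' ⊆ VioV G ψ := by
        intro w hw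
        by_cases hwa : w = a
        · exact absurd hw.2 (by rw [hwa]; exact hOa.ne_empty)
        by_cases hwb : w = b
        · exact absurd hw.2 (by rw [hwb]; exact hOb.ne_empty)
        exact ⟨hw.1, by rw [← hOsame w hwa hwb]; exact hw.2⟩
      have hEsub : VioE G ψ' ⊆ VioE G ψ := by
        rintro ⟨x, y⟩ ⟨hxy, hEq⟩
        exact ⟨hxy, (hprop x y hxy hEq).1⟩
      have hznot : z ∉ VioV G ψ' := by
        intro hzv
        rcases hzab with rfl | rfl
        · exact hOa.ne_empty hzv.2
        · exact hOb.ne_empty hzv.2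
      have hssub : VioV G ψ' ⊂ VioV G ψ := ⟨hVsub, fun h => hznot (h hz)⟩
      have h1 : (VioV G ψ').ncard < (VioV G ψ).ncard :=
        Set.ncard_lt_ncard hssub (Set.toFinite _)
      have h2 : (VioE G ψ').ncard ≤ (VioE G ψ).ncard :=
        Set.ncard_le_ncard hEsub (Set.toFinite _)
      exact ih ψ' (fun p hp => hInvE p (hEsub hp)) (fun w hw => hInvV w (hVsub hw)) (by omega)
    · by_cases hE : (VioE G ψ).Nonempty
      · obtain ⟨⟨x, y⟩, hxy, hEq⟩ := hE
        have hd : deg G x = 2 ∨ deg G y = 2 := hInvE (x, y) ⟨hxy, hEq⟩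
        -- make r the degree-2 endpoint, y' the other
        obtain ⟨r, y', hry, hEq', hr2⟩ :
            ∃ r y', G.Adj r y' ∧ ψ r = ψ y' ∧ deg G r = 2 := by
          rcases hd with h | h
          · exact ⟨x, y, hxy, hEq, h⟩
          · exact ⟨y, x, G.adj_symm hxy, hEq.symm, h⟩
        obtain ⟨a, b, hab, hN⟩ := Set.ncard_eq_two.mp hr2
        have hyab : y' = a ∨ y' = b := by
          have : y' ∈ G.neighborSet r := hry
          rw [hN] at this
          exact this
        have htarget : OddsSet G ψ a = ∅ ∨ OddsSet G ψ b = ∅ ∨ ψ r = ψ a ∨ ψ r = ψ b := by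
          rcases hyab with rfl | rfl
          · exact Or.inr (Or.inr (Or.inl hEq'))
          · exact Or.inr (Or.inr (Or.inr hEq'))
        obtain ⟨β, hβr, hβa, hβb, hOa, hOb, hOsame, hprop⟩ :=
          repair hcard G ψ r a b hab hN htarget
        set ψ' := Function.update ψ r β with hψ'
        have hVsub : VioV G ψ' ⊆ VioV G ψ := by
          intro w hw
          by_cases hwa : w = a
          · exact absurd hw.2 (by rw [hwa]; exact hOa.ne_empty)
          by_cases hwb : w = b
          · exact absurd hw.2 (by rw [hwb]; exact hOb.ne_empty)
          exact ⟨hw.1, by rw [← hOsame w hwa hwb]; exact hw.2⟩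
        have hEsub : VioE G ψ' ⊆ VioE G ψ := by
          rintro ⟨x', y''⟩ ⟨hxy', hEq''⟩
          exact ⟨hxy', (hprop x' y'' hxy' hEq'').1⟩
        have hnot : (r, y') ∉ VioE G ψ' := by
          rintro ⟨hadj, hEq''⟩
          exact (hprop r y' hadj hEq'').2.1 rfl
        have hssub : VioE G ψ' ⊂ VioE G ψ :=
          ⟨hEsub, fun h => hnot (h ⟨hry, hEq'⟩)⟩
        have h1 : (VioE G ψ').ncard < (VioE G ψ).ncard :=
          Set.ncard_lt_ncard hssub (Set.toFinite _)
        have h2 : (VioV G ψ').ncard ≤ (VioV G ψ).ncard :=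
          Set.ncard_le_ncard hVsub (Set.toFinite _)
        exact ih ψ' (fun p hp => hInvE p (hEsub hp)) (fun w hw => hInvV w (hVsub hw)) (by omega)
      · -- no violations at all
        rw [Set.not_nonempty_iff_eq_empty] at hV hE
        refine ⟨ψ, ?_, ?_⟩
        · intro x y hxy hEq
          have : (x, y) ∈ VioE G ψ := ⟨hxy, hEq⟩
          rw [hE] at this; exact this
        · intro z hz
          by_contra hcon
          push_neg at hcon
          have hodds : OddsSet G ψ z = ∅ := by
            ext c
            simp only [OddsSet, Set.mem_setOf_eq, Set.mem_empty_iff_false, iff_false]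
            exact hcon c
          have : z ∈ VioV G ψ := ⟨hz, hodds⟩
          rw [hV] at this; exact this

section extend
variable {V : Type} [Fintype V] [DecidableEq V] {m : ℕ} (G : SimpleGraph V)
  (φ : V → Fin m) (v : V) (α : Fin m)

lemma ext_cnt_ne (w : V) (c : Fin m) (hc : c ≠ α) :
    {x | x ∈ G.neighborSet w ∧ Function.update φ v α x = c}
      = {x | x ∈ G.neighborSet w ∧ x ≠ v ∧ φ x = c} := by
  ext x
  simp only [Set.mem_setOf_eq, and_congr_right_iff]
  intro _
  by_cases h : x = v
  · subst h
    rw [Function.update_self]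
    exact ⟨fun h' => absurd h'.symm hc, fun h' => absurd rfl h'.1⟩
  · rw [Function.update_of_ne h]
    exact ⟨fun h' => ⟨h, h'⟩, fun h' => h'.2⟩

lemma ext_cnt_alpha (w : V) (hvw : v ∈ G.neighborSet w) :
    {x | x ∈ G.neighborSet w ∧ Function.update φ v α x = α}.ncard
      = {x | x ∈ G.neighborSet w ∧ x ≠ v ∧ φ x = α}.ncard + 1 := by
  have h1 : {x | x ∈ G.neighborSet w ∧ Function.update φ v α x = α}
      = insert v {x | x ∈ G.neighborSet w ∧ x ≠ v ∧ φ x = α} := by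
    ext x
    simp only [Set.mem_setOf_eq, Set.mem_insert_iff]
    constructor
    · rintro ⟨hx, hc⟩
      by_cases h : x = v
      · exact Or.inl h
      · right; rw [Function.update_of_ne h] at hc; exact ⟨hx, h, hc⟩
    · rintro (rfl | ⟨hx, hxv, hc⟩)
      · exact ⟨hvw, Function.update_self _ _ _⟩
      · exact ⟨hx, by rw [Function.update_of_ne hxv]; exact hc⟩
  rw [h1, Set.ncard_insert_of_notMem (fun h => h.2.1 rfl) (Set.toFinite _)]

lemma ext_cnt_nomem (w : V) (hvw : v ∉ G.neighborSet w) (c : Fin m) :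
    {x | x ∈ G.neighborSet w ∧ Function.update φ v α x = c}
      = {x | x ∈ G.neighborSet w ∧ x ≠ v ∧ φ x = c} := by
  ext x
  simp only [Set.mem_setOf_eq, and_congr_right_iff]
  intro hx
  have hxv : x ≠ v := fun h => hvw (h ▸ hx)
  rw [Function.update_of_ne hxv]
  exact ⟨fun h' => ⟨hxv, h'⟩, fun h' => h'.2⟩

/-- if the extended coloring has all counts even at `w` (with `v ∈ N(w)`), then
the odd colors of `φ` at `w` away from `v` form exactly `{α}`. -/
lemma ext_all_even (w : V) (hvw : v ∈ G.neighborSet w)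
    (hall : ∀ c, ¬ Odd ({x | x ∈ G.neighborSet w ∧ Function.update φ v α x = c}.ncard)) :
    {c | Odd ({x | x ∈ G.neighborSet w ∧ x ≠ v ∧ φ x = c}.ncard)} = {α} := by
  ext c
  simp only [Set.mem_setOf_eq, Set.mem_singleton_iff]
  constructor
  · intro hc
    by_contra hcα
    have := hall c
    rw [ext_cnt_ne G φ v α w c hcα] at this
    exact this hc
  · intro hc
    rw [hc]
    have := hall α
    rw [ext_cnt_alpha G φ v α w hvw] at this
    rcases Nat.even_or_odd ({x | x ∈ G.neighborSet w ∧ x ≠ v ∧ φ x = α}.ncard) with he | ho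
    · exact absurd (Even.add_one he) this
    · exact ho

end extend

/-- For an odd `k⁺`-critical graph with `k ≥ 6`: there is no vertex of degree 1, and every easy
vertex `v` satisfies `2d(v) ≥ |N₂(v)| + |N_ez(v)| + k − 1`. -/
theorem oddCritical_easy_degree_bound {V : Type} [Fintype V] (G : SimpleGraph V)
    (k : ℕ) (hk : 6 ≤ k) (hG : OddCritical G k) :
    (∀ v : V, deg G v ≠ 1) ∧
    ∀ v : V, NEasy G 1 v →
      {u | u ∈ G.neighborSet v ∧ deg G u = 2}.ncard +
        {u | u ∈ G.neighborSet v ∧ NEasy G 1 u}.ncard + k ≤ 2 * deg G v + 1 := by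
  classical
  have hcard5 : 5 ≤ k - 1 := by omega
  have hcardC : (Set.univ : Set (Fin (k-1))).ncard = k - 1 := by
    rw [Set.ncard_univ, Nat.card_eq_fintype_card, Fintype.card_fin]
  have hNoCol : ¬ ∃ φ : V → Fin (k-1), IsOddColoring G φ := by
    rintro ⟨φ, hφ⟩
    have h1 : oddChrom G ≤ k - 1 := Nat.sInf_le ⟨φ, hφ⟩
    have h2 := hG.1
    omega
  constructor
  · -- part 1 : no vertex of degree 1
    intro v h1
    have h1' : (G.neighborSet v).ncard = 1 := h1
    obtain ⟨u, hNv⟩ := Set.ncard_eq_one.mp h1'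
    have huNv : u ∈ G.neighborSet v := by rw [hNv]; rfl
    have huv : u ≠ v := fun h => G.irrefl (h ▸ huNv)
    obtain ⟨φ, hP1, hP2⟩ := bridge G k hk hG v
    set Sing : V → Set (Fin (k-1)) := fun w =>
      {c | {c' | Odd ({x | x ∈ G.neighborSet w ∧ x ≠ v ∧ φ x = c'}.ncard)} = {c}} with hSing
    have hSing1 : ∀ w, (Sing w).ncard ≤ 1 := by
      intro w
      rw [Set.ncard_le_one (Set.toFinite _)]
      intro c₁ hc₁ c₂ hc₂
      simp only [hSing, Set.mem_setOf_eq] at hc₁ hc₂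
      have : ({c₁} : Set (Fin (k-1))) = {c₂} := by rw [← hc₁, ← hc₂]
      exact Set.singleton_eq_singleton_iff.mp this
    set Bad : Set (Fin (k-1)) := {φ u} ∪ Sing u with hBad
    have hBadcard : Bad.ncard ≤ 2 := by
      calc Bad.ncard ≤ ({φ u} : Set (Fin (k-1))).ncard + (Sing u).ncard :=
          Set.ncard_union_le _ _
        _ ≤ 2 := by rw [Set.ncard_singleton]; have := hSing1 u; omega
    obtain ⟨α, hαmem⟩ : ((Set.univ : Set (Fin (k-1))) \ Bad).Nonempty := by
      apply Set.diff_nonempty_of_ncard_lt_ncard _ (Set.toFinite _)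
      omega
    have hαBad : α ∉ Bad := hαmem.2
    set ψ := Function.update φ v α with hψ
    apply hNoCol
    refine ⟨ψ, ?_, ?_⟩
    · intro x y hxy hEq
      by_cases hx : x = v
      · subst hx
        have hy : y = u := by
          have : y ∈ G.neighborSet x := hxy
          rw [hNv] at this; exact this
        subst hy
        rw [hψ, Function.update_self, Function.update_of_ne huv] at hEq
        exact hαBad (Or.inl hEq)
      · by_cases hy : y = v
        · subst hy
          have hx' : x = u := by
            have : x ∈ G.neighborSet y := G.adj_symm hxy
            rw [hNv] at this; exact this
          subst hx'
          rw [hψ, Function.update_self, Function.update_of_ne huv] at hEq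
          exact hαBad (Or.inl hEq.symm)
        · rw [hψ, Function.update_of_ne hx, Function.update_of_ne hy] at hEq
          exact hP1 hx hy hxy hEq
    · intro z hz
      by_cases hzv : z = v
      · subst hzv
        refine ⟨ψ u, ?_⟩
        have : {x | x ∈ G.neighborSet z ∧ ψ x = ψ u} = {u} := by
          ext x
          rw [hNv]
          simp only [Set.mem_setOf_eq, Set.mem_singleton_iff]
          exact ⟨fun h => h.1, fun h => ⟨h, by rw [h]⟩⟩
        rw [this, Set.ncard_singleton]
        exact odd_one
      · by_cases hvz : v ∈ G.neighborSet z
        · by_contra hcon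
          push_neg at hcon
          have hall : ∀ c, ¬ Odd ({x | x ∈ G.neighborSet z ∧ ψ x = c}.ncard) := by
            intro c hc; exact absurd hc (by simpa using hcon c)
          have hsingle := ext_all_even G φ v α z hvz hall
          have hzu : z = u := by
            have : z ∈ G.neighborSet v := by
              rw [SimpleGraph.mem_neighborSet, SimpleGraph.adj_comm]; exact hvz
            rw [hNv] at this; exact this
          apply hαBad
          right
          rw [hSing]
          simp only [Set.mem_setOf_eq]
          rw [← hzu]
          exact hsingle
        · obtain ⟨w, hw⟩ := hz
          have hwv : w ≠ v := fun h => hvz (h ▸ hw)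
          obtain ⟨c, hc⟩ := hP2 z hzv ⟨w, hw, hwv⟩
          refine ⟨c, ?_⟩
          rw [hψ, ext_cnt_nomem G φ v α z hvz c]
          exact hc
  · -- part 2
    intro v hveasy
    by_contra hlt
    push_neg at hlt
    set d := deg G v with hd
    set N2 : Set V := {u | u ∈ G.neighborSet v ∧ deg G u = 2} with hN2
    set Ez : Set V := {u | u ∈ G.neighborSet v ∧ NEasy G 1 u} with hEz
    have hN2sub : N2 ⊆ G.neighborSet v := fun u hu => hu.1
    have hEzsub : Ez ⊆ G.neighborSet v := fun u hu => hu.1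
    have hA : N2.ncard ≤ d := Set.ncard_le_ncard hN2sub (Set.toFinite _)
    have hB : Ez.ncard ≤ d := Set.ncard_le_ncard hEzsub (Set.toFinite _)
    obtain ⟨φ, hP1, hP2⟩ := bridge G k hk hG v
    set Sing : V → Set (Fin (k-1)) := fun w =>
      {c | {c' | Odd ({x | x ∈ G.neighborSet w ∧ x ≠ v ∧ φ x = c'}.ncard)} = {c}} with hSing
    have hSing1 : ∀ w, (Sing w).ncard ≤ 1 := by
      intro w
      rw [Set.ncard_le_one (Set.toFinite _)]
      intro c₁ hc₁ c₂ hc₂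
      simp only [hSing, Set.mem_setOf_eq] at hc₁ hc₂
      have : ({c₁} : Set (Fin (k-1))) = {c₂} := by rw [← hc₁, ← hc₂]
      exact Set.singleton_eq_singleton_iff.mp this
    set Bad : Set (Fin (k-1)) :=
      (φ '' (G.neighborSet v \ N2)) ∪ (⋃ u ∈ (G.neighborSet v \ Ez), Sing u) with hBad
    have hBadcard : Bad.ncard ≤ k - 2 := by
      have h1 : (φ '' (G.neighborSet v \ N2)).ncard ≤ (G.neighborSet v \ N2).ncard :=
        Set.ncard_image_le (Set.toFinite _)
      have hd1 : (G.neighborSet v \ N2).ncard = d - N2.ncard :=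
        Set.ncard_diff hN2sub (Set.toFinite _)
      set g : V → Fin (k-1) := fun u =>
        if h : (Sing u).Nonempty then h.choose else ⟨0, by omega⟩ with hg
      have h2 : (⋃ u ∈ (G.neighborSet v \ Ez), Sing u) ⊆ g '' (G.neighborSet v \ Ez) := by
        intro c hc
        rw [Set.mem_iUnion₂] at hc
        obtain ⟨u, hu, hcu⟩ := hc
        refine ⟨u, hu, ?_⟩
        have hne : (Sing u).Nonempty := ⟨c, hcu⟩
        have hgu : g u ∈ Sing u := by
          rw [hg]; simp only [dif_pos hne]; exact hne.choose_spec
        have := Set.ncard_le_one (Set.toFinite (Sing u)) |>.mp (hSing1 u)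
        exact this _ hgu _ hcu
      have h3 : (⋃ u ∈ (G.neighborSet v \ Ez), Sing u).ncard
          ≤ (G.neighborSet v \ Ez).ncard := by
        calc (⋃ u ∈ (G.neighborSet v \ Ez), Sing u).ncard
            ≤ (g '' (G.neighborSet v \ Ez)).ncard :=
              Set.ncard_le_ncard h2 (Set.toFinite _)
          _ ≤ (G.neighborSet v \ Ez).ncard := Set.ncard_image_le (Set.toFinite _)
      have hd2 : (G.neighborSet v \ Ez).ncard = d - Ez.ncard :=
        Set.ncard_diff hEzsub (Set.toFinite _)
      have h4 : Bad.ncard ≤ (φ '' (G.neighborSet v \ N2)).ncard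
          + (⋃ u ∈ (G.neighborSet v \ Ez), Sing u).ncard := Set.ncard_union_le _ _
      omega
    obtain ⟨α, hαmem⟩ : ((Set.univ : Set (Fin (k-1))) \ Bad).Nonempty := by
      apply Set.diff_nonempty_of_ncard_lt_ncard _ (Set.toFinite _)
      omega
    have hαBad : α ∉ Bad := hαmem.2
    set ψ₀ := Function.update φ v α with hψ₀
    have hInvE : ∀ p ∈ VioE G ψ₀, deg G p.1 = 2 ∨ deg G p.2 = 2 := by
      rintro ⟨x, y⟩ ⟨hxy, hEq⟩
      by_cases hx : x = v
      · rw [hx] at hxy hEq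
        have hyv : y ≠ v := (G.ne_of_adj hxy).symm
        rw [hψ₀, Function.update_self, Function.update_of_ne hyv] at hEq
        right
        by_contra hy2
        apply hαBad
        left
        exact ⟨y, ⟨hxy, fun h => hy2 h.2⟩, hEq.symm⟩
      · by_cases hy : y = v
        · rw [hy] at hxy hEq
          have hxv : x ≠ v := G.ne_of_adj hxy
          rw [hψ₀, Function.update_self, Function.update_of_ne hxv] at hEq
          left
          by_contra hx2
          apply hαBad
          left
          exact ⟨x, ⟨G.adj_symm hxy, fun h => hx2 h.2⟩, hEq⟩
        · rw [hψ₀, Function.update_of_ne hx, Function.update_of_ne hy] at hEq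
          exact absurd hEq (hP1 hx hy hxy)
    have hInvV : ∀ z ∈ VioV G ψ₀, ∃ r ∈ G.neighborSet z, deg G r = 2 := by
      rintro z ⟨hzne, hodds⟩
      have hall : ∀ c, ¬ Odd ({x | x ∈ G.neighborSet z ∧ ψ₀ x = c}.ncard) := by
        intro c hc
        have : c ∈ OddsSet G ψ₀ z := hc
        rw [hodds] at this
        exact this
      by_cases hzv : z = v
      · rw [hzv] at hall hzne ⊢
        rcases hveasy with hoddd | ⟨u, huN, i, hi1, hi2, hdeg⟩
        · exfalso
          have hpar := parity_fibers (G.neighborSet v) ψ₀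
          have hO : {c | Odd ({u | u ∈ G.neighborSet v ∧ ψ₀ u = c}.ncard)} = ∅ := by
            ext c
            simp only [Set.mem_setOf_eq, Set.mem_empty_iff_false, iff_false]
            exact hall c
          rw [hO, Set.ncard_empty] at hpar
          obtain ⟨t, ht⟩ := hoddd
          have hdd : deg G v = (G.neighborSet v).ncard := rfl
          omega
        · have : i = 1 := le_antisymm hi2 hi1
          subst this
          exact ⟨u, huN, by omega⟩
      · by_cases hvz : v ∈ G.neighborSet z
        · have hsingle := ext_all_even G φ v α z hvz hall
          have hzNv : z ∈ G.neighborSet v := by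
            rw [SimpleGraph.mem_neighborSet, SimpleGraph.adj_comm]; exact hvz
          have hzEz : z ∈ Ez := by
            by_contra hzE
            apply hαBad
            right
            rw [Set.mem_iUnion₂]
            exact ⟨z, ⟨hzNv, hzE⟩, hsingle⟩
          rcases hzEz.2 with hoddd | ⟨u, huN, i, hi1, hi2, hdeg⟩
          · exfalso
            have hpar := parity_fibers (G.neighborSet z \ {v}) φ
            have hsets : ∀ c : Fin (k-1), {u | u ∈ G.neighborSet z \ {v} ∧ φ u = c}
                = {x | x ∈ G.neighborSet z ∧ x ≠ v ∧ φ x = c} := by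
              intro c
              ext x
              simp only [Set.mem_setOf_eq, Set.mem_diff, Set.mem_singleton_iff]
              tauto
            have hO2 : {c | Odd ({u | u ∈ G.neighborSet z \ {v} ∧ φ u = c}.ncard)} = {α} := by
              rw [← hsingle]
              ext c
              simp only [Set.mem_setOf_eq]
              rw [hsets c]
            rw [hO2, Set.ncard_singleton] at hpar
            have hdz : (G.neighborSet z \ {v}).ncard = deg G z - 1 := by
              rw [Set.ncard_diff_singleton_of_mem hvz]
              rfl
            obtain ⟨t, ht⟩ := hoddd
            have : deg G z = (G.neighborSet z).ncard := rfl
            omega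
          · have : i = 1 := le_antisymm hi2 hi1
            subst this
            exact ⟨u, huN, by omega⟩
        · exfalso
          obtain ⟨w, hw⟩ := hzne
          have hwv : w ≠ v := fun h => hvz (h ▸ hw)
          obtain ⟨c, hc⟩ := hP2 z hzv ⟨w, hw, hwv⟩
          apply hall c
          rw [hψ₀, ext_cnt_nomem G φ v α z hvz c]
          exact hc
    obtain ⟨φ', hφ'⟩ := colorable_of_inv G (k-1) hcard5
      ((VioV G ψ₀).ncard + (VioE G ψ₀).ncard) ψ₀ hInvE hInvV le_rfl
    exact hNoCol ⟨φ', hφ'⟩
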